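/- Let 0 < λ < 1 and let t be a positive integer. Suppose h, f, g : ℝⁿ → [0,∞) satisfy h((1-λ)^{1/q} μ^{1/p} x + λ^{1/q} ω^{1/p} y)^{1/s} ≥ (1-λ)^{1/q} μ^{1/p} f(x)^{1/s} + λ^{1/q} ω^{1/p} g(y)^{1/s} for all x ∈ supp f, y ∈ supp g, λ ∈ [0,1], where p ≥ 1 with conjugate q, and μ, ω, s > 0. Define f̃, g̃, h̃ : ℝ^{nt} → [0,∞) by f̃(x₁,…,x_t) = ∏ᵢ f(xᵢ), etc. Then for all x, y ∈ ℝ^{nt} and λ ∈ [0,1]: h̃((1-λ)^{1/q} μ^{1/p} x + λ^{1/q} ω^{1/p} y)^{1/(ts)} ≥ (1-λ)^{1/q} μ^{1/p} f̃(x)^{1/(ts)} + λ^{1/q} ω^{1/p} g̃(y)^{1/(ts)}. -/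

import Mathlib

open MeasureTheory Set Function

noncomputable section

abbrev En (n : ℕ) := EuclideanSpace ℝ (Fin n)

def fsupp {n : ℕ} (f : En n → ℝ) : Set (En n) := closure (Function.support f)

/-- Superadditivity of the geometric mean. -/
lemma geom_mean_superadd {t : ℕ} (ht : 0 < t) (a b : Fin t → ℝ)
    (ha : ∀ i, 0 ≤ a i) (hb : ∀ i, 0 ≤ b i) :
    (∏ i, a i) ^ ((t : ℝ))⁻¹ + (∏ i, b i) ^ ((t : ℝ))⁻¹
      ≤ (∏ i, (a i + b i)) ^ ((t : ℝ))⁻¹ := by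
  by_cases hz : ∃ i, a i + b i = 0
  · obtain ⟨i, hi⟩ := hz
    have hai : a i = 0 := le_antisymm (by linarith [hb i, ha i]) (ha i)
    have hbi : b i = 0 := by linarith
    have h1 : (∏ j, a j) = 0 := Finset.prod_eq_zero (Finset.mem_univ i) hai
    have h2 : (∏ j, b j) = 0 := Finset.prod_eq_zero (Finset.mem_univ i) hbi
    rw [h1, h2, Real.zero_rpow (by positivity), add_zero]
    exact Real.rpow_nonneg (Finset.prod_nonneg fun j _ => by linarith [ha j, hb j]) _
  push_neg at hz
  have hpos : ∀ i, 0 < a i + b i := fun i =>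
    lt_of_le_of_ne (by linarith [ha i, hb i]) (Ne.symm (hz i))
  have hPpos : 0 < ∏ i, (a i + b i) := Finset.prod_pos fun i _ => hpos i
  set P := (∏ i, (a i + b i)) ^ ((t : ℝ))⁻¹ with hP
  have hPp : 0 < P := Real.rpow_pos_of_pos hPpos _
  have hw : ∀ i ∈ (Finset.univ : Finset (Fin t)), (0:ℝ) ≤ (t : ℝ)⁻¹ := fun _ _ => by positivity
  have hw1 : ∑ _i : Fin t, ((t : ℝ))⁻¹ = 1 := by
    rw [Finset.sum_const, Finset.card_univ, Fintype.card_fin, nsmul_eq_mul,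
      mul_inv_cancel₀ (by positivity)]
  have amgm : ∀ c : Fin t → ℝ, (∀ i, 0 ≤ c i) →
      (∏ i, c i) ^ ((t : ℝ))⁻¹ / P ≤ ∑ i, ((t : ℝ))⁻¹ * (c i / (a i + b i)) := by
    intro c hc
    have h1 := Real.geom_mean_le_arith_mean_weighted Finset.univ (fun _ => ((t : ℝ))⁻¹)
      (fun i => c i / (a i + b i)) hw hw1 (fun i _ => div_nonneg (hc i) (hpos i).le)
    calc (∏ i, c i) ^ ((t : ℝ))⁻¹ / P
        = ∏ i, (c i / (a i + b i)) ^ ((t : ℝ))⁻¹ := by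
          rw [Real.finset_prod_rpow _ _ (fun i _ => div_nonneg (hc i) (hpos i).le), Finset.prod_div_distrib,
            Real.div_rpow (Finset.prod_nonneg fun i _ => hc i) hPpos.le]
      _ ≤ _ := h1
  have hA := amgm a ha
  have hB := amgm b hb
  have hsum : (∑ i, ((t : ℝ))⁻¹ * (a i / (a i + b i)))
      + (∑ i, ((t : ℝ))⁻¹ * (b i / (a i + b i))) = 1 := by
    rw [← Finset.sum_add_distrib, ← hw1]
    apply Finset.sum_congr rfl
    intro i _
    rw [← mul_add, ← add_div, div_self (hpos i).ne']
    ring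
  have : (∏ i, a i) ^ ((t : ℝ))⁻¹ / P + (∏ i, b i) ^ ((t : ℝ))⁻¹ / P ≤ 1 := by
    calc _ ≤ _ := add_le_add hA hB
      _ = 1 := hsum
  calc (∏ i, a i) ^ ((t : ℝ))⁻¹ + (∏ i, b i) ^ ((t : ℝ))⁻¹
      = ((∏ i, a i) ^ ((t : ℝ))⁻¹ / P + (∏ i, b i) ^ ((t : ℝ))⁻¹ / P) * P := by
        field_simp
    _ ≤ 1 * P := by
        apply mul_le_mul_of_nonneg_right this hPp.le
    _ = P := one_mul P

lemma prod_scaled {t : ℕ} (ht : 0 < t) (s c : ℝ) (hs : 0 < s) (hc : 0 ≤ c)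
    (v : Fin t → ℝ) (hv : ∀ i, 0 ≤ v i) :
    (∏ i, (c * v i ^ s⁻¹)) ^ ((t : ℝ))⁻¹ = c * (∏ i, v i) ^ ((t : ℝ) * s)⁻¹ := by
  have hvP : (0:ℝ) ≤ ∏ i, v i := Finset.prod_nonneg fun i _ => hv i
  rw [Finset.prod_mul_distrib, Finset.prod_const, Finset.card_univ, Fintype.card_fin,
    Real.finset_prod_rpow _ _ (fun i _ => hv i),
    Real.mul_rpow (pow_nonneg hc _) (Real.rpow_nonneg hvP _),
    ← Real.rpow_natCast c t, ← Real.rpow_mul hc, mul_inv_cancel₀ (by positivity :(t:ℝ) ≠ 0),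
    Real.rpow_one, ← Real.rpow_mul hvP]
  congr 1
  rw [mul_inv]
  ring

/-- Tensorization step (inequality (4.2)): the hypothesis of the `L_p`
Prékopa–Leindler inequality passes from `(f, g, h)` on `ℝⁿ` with exponent `1/s`
to `(f̃, g̃, h̃)` on `ℝ^{nt}` with exponent `1/(ts)`, where
`f̃(x₁,…,x_t) = ∏ᵢ f(xᵢ)` and `1/q = 1 - 1/p`. -/
theorem tensorization {n : ℕ} (t : ℕ) (ht : 0 < t) (p s μ ω : ℝ)
    (hp : 1 ≤ p) (hs : 0 < s) (hμ : 0 < μ) (hω : 0 < ω)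
    (f g h : En n → ℝ)
    (hf0 : ∀ x, 0 ≤ f x) (hg0 : ∀ x, 0 ≤ g x) (hh0 : ∀ x, 0 ≤ h x)
    (hcond : ∀ x ∈ fsupp f, ∀ y ∈ fsupp g, ∀ l ∈ Icc (0:ℝ) 1,
      ((1 - l) ^ (1 - p⁻¹) * μ ^ p⁻¹) * f x ^ s⁻¹ + (l ^ (1 - p⁻¹) * ω ^ p⁻¹) * g y ^ s⁻¹
        ≤ h (((1 - l) ^ (1 - p⁻¹) * μ ^ p⁻¹) • x + (l ^ (1 - p⁻¹) * ω ^ p⁻¹) • y) ^ s⁻¹) :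
    ∀ x y : Fin t → En n, (∀ i, x i ∈ fsupp f) → (∀ i, y i ∈ fsupp g) →
      ∀ l ∈ Icc (0:ℝ) 1,
      ((1 - l) ^ (1 - p⁻¹) * μ ^ p⁻¹) * (∏ i, f (x i)) ^ ((t : ℝ) * s)⁻¹
          + (l ^ (1 - p⁻¹) * ω ^ p⁻¹) * (∏ i, g (y i)) ^ ((t : ℝ) * s)⁻¹
        ≤ (∏ i, h ((((1 - l) ^ (1 - p⁻¹) * μ ^ p⁻¹) • x
              + (l ^ (1 - p⁻¹) * ω ^ p⁻¹) • y) i)) ^ ((t : ℝ) * s)⁻¹ := by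
  intro x y hx hy l hl
  obtain ⟨hl0, hl1⟩ := hl
  set c : ℝ := (1 - l) ^ (1 - p⁻¹) * μ ^ p⁻¹ with hcdef
  set d : ℝ := l ^ (1 - p⁻¹) * ω ^ p⁻¹ with hddef
  have hc : 0 ≤ c := mul_nonneg (Real.rpow_nonneg (by linarith) _) (Real.rpow_nonneg hμ.le _)
  have hd : 0 ≤ d := mul_nonneg (Real.rpow_nonneg hl0 _) (Real.rpow_nonneg hω.le _)
  set a : Fin t → ℝ := fun i => c * f (x i) ^ s⁻¹ with hadef
  set b : Fin t → ℝ := fun i => d * g (y i) ^ s⁻¹ with hbdef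
  have ha : ∀ i, 0 ≤ a i := fun i => mul_nonneg hc (Real.rpow_nonneg (hf0 _) _)
  have hb : ∀ i, 0 ≤ b i := fun i => mul_nonneg hd (Real.rpow_nonneg (hg0 _) _)
  have key := geom_mean_superadd ht a b ha hb
  rw [prod_scaled ht s c hs hc _ (fun i => hf0 _),
    prod_scaled ht s d hs hd _ (fun i => hg0 _)] at key
  refine key.trans ?_
  have hab : ∀ i, a i + b i ≤ h ((c • x + d • y) i) ^ s⁻¹ := by
    intro i
    have := hcond (x i) (hx i) (y i) (hy i) l ⟨hl0, hl1⟩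
    simpa [hadef, hbdef] using this
  calc (∏ i, (a i + b i)) ^ ((t : ℝ))⁻¹
      ≤ (∏ i, h ((c • x + d • y) i) ^ s⁻¹) ^ ((t : ℝ))⁻¹ := by
        apply Real.rpow_le_rpow
          (Finset.prod_nonneg fun i _ => add_nonneg (ha i) (hb i))
          (Finset.prod_le_prod (fun i _ => add_nonneg (ha i) (hb i)) fun i _ => hab i)
          (by positivity)
    _ = (∏ i, h ((c • x + d • y) i)) ^ ((t : ℝ) * s)⁻¹ := by
        rw [Real.finset_prod_rpow _ _ (fun i _ => hh0 _),
          ← Real.rpow_mul (Finset.prod_nonneg fun i _ => hh0 _)]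
        congr 1
        rw [mul_inv]
        ring

end
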